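/- In the layered ballot graph with edge costs c({b, b∪{c}}) = 1/|b|^{1/p}, for any ballot v and any candidate c ∉ v, the closest ballot containing c (under shortest-path distance) is v ∪ {c}, at distance 1/|v|^{1/p}. -/
import Mathlib


open scoped ENNReal BigOperators symmDiff

/-- Normalizer `|b|^{1/p}` for `p ∈ [1,∞]` (for `p = ∞` this is `|b|^0 = 1`). -/
noncomputable def wt (p : ℝ≥0∞) (card : ℕ) : ℝ := (card : ℝ) ^ (1 / p).toReal

/-- Adjacency in the layered ballot graph: ballots differing in exactly one element. -/
def Adj {C : Type*} [DecidableEq C] (b b' : Finset C) : Prop := (b ∆ b').card = 1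

/-- Cost of the edge between adjacent ballots: `1/|b|^{1/p}` where `b` is the smaller one. -/
noncomputable def edgeCost {C : Type*} (p : ℝ≥0∞) (b b' : Finset C) : ℝ :=
  (wt p (min b.card b'.card))⁻¹

/-- Total cost of a path, given as the list of its vertices. -/
noncomputable def pathCost {C : Type*} (p : ℝ≥0∞) : List (Finset C) → ℝ
  | [] => 0
  | [_] => 0
  | a :: b :: l => edgeCost p a b + pathCost p (b :: l)

/-- `L` is a walk from `v` to `w` through nonempty ballots in the layered graph. -/
def IsWalk {C : Type*} [DecidableEq C] (L : List (Finset C)) (v w : Finset C) : Prop :=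
  L.Chain' Adj ∧ L.head? = some v ∧ L.getLast? = some w ∧ ∀ b ∈ L, b.Nonempty

/-- Shortest-path distance between ballots in the layered graph. -/
noncomputable def gdist {C : Type*} [DecidableEq C] (p : ℝ≥0∞) (v w : Finset C) : ℝ :=
  sInf {x : ℝ | ∃ L : List (Finset C), IsWalk L v w ∧ x = pathCost p L}

lemma wt_pos (p : ℝ≥0∞) {n : ℕ} (hn : 1 ≤ n) : 0 < wt p n :=
  Real.rpow_pos_of_pos (by exact_mod_cast hn) _

lemma wt_mono (p : ℝ≥0∞) {m n : ℕ} (h : m ≤ n) : wt p m ≤ wt p n :=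
  Real.rpow_le_rpow (by positivity) (by exact_mod_cast h) ENNReal.toReal_nonneg

lemma edgeCost_nonneg {C : Type*} (p : ℝ≥0∞) (b b' : Finset C) : 0 ≤ edgeCost p b b' := by
  unfold edgeCost wt; positivity

lemma pathCost_nonneg {C : Type*} (p : ℝ≥0∞) : ∀ L : List (Finset C), 0 ≤ pathCost p L
  | [] => le_refl 0
  | [_] => le_refl 0
  | a :: b :: l => add_nonneg (edgeCost_nonneg p a b) (pathCost_nonneg p (b :: l))

lemma edgeCost_ge {C : Type*} (p : ℝ≥0∞) {v b : Finset C} (hv : v.Nonempty) (hb : b.Nonempty) :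
    (wt p v.card)⁻¹ ≤ edgeCost p v b := by
  unfold edgeCost
  have h1 : 1 ≤ min v.card b.card :=
    le_min (Finset.card_pos.mpr hv) (Finset.card_pos.mpr hb)
  exact inv_anti₀ (wt_pos p h1) (wt_mono p (min_le_left _ _))

lemma pathCost_lower {C : Type*} [DecidableEq C] (p : ℝ≥0∞) {L : List (Finset C)}
    {v w : Finset C} (h : IsWalk L v w) (hne : v ≠ w) : (wt p v.card)⁻¹ ≤ pathCost p L := by
  obtain ⟨hch, hh, hl, hmem⟩ := h
  match L with
  | [] => simp at hh
  | [a] =>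
      simp at hh hl; exact absurd (hh.symm.trans hl) hne
  | a :: b :: l =>
      simp at hh; subst hh
      have hb : b.Nonempty := hmem b (by simp)
      calc (wt p a.card)⁻¹ ≤ edgeCost p a b := edgeCost_ge p (hmem a (by simp)) hb
        _ ≤ edgeCost p a b + pathCost p (b :: l) :=
            le_add_of_nonneg_right (pathCost_nonneg p _)
        _ = pathCost p (a :: b :: l) := rfl

lemma adj_insert {C : Type*} [DecidableEq C] {v : Finset C} {x : C} (hx : x ∉ v) :
    Adj v (insert x v) := by
  have : v ∆ insert x v = {x} := by
    ext a
    simp only [Finset.mem_symmDiff, Finset.mem_insert, Finset.mem_singleton]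
    by_cases ha : a = x <;> simp [ha, hx]
  simp [Adj, this]

lemma adj_erase {C : Type*} [DecidableEq C] {v : Finset C} {x : C} (hx : x ∈ v) :
    Adj v (v.erase x) := by
  have : v ∆ v.erase x = {x} := by
    ext a
    simp only [Finset.mem_symmDiff, Finset.mem_erase, Finset.mem_singleton]
    by_cases ha : a = x <;> simp [ha, hx]
  simp [Adj, this]

lemma exists_walk {C : Type*} [DecidableEq C] (v w : Finset C) (hv : v.Nonempty)
    (hw : w.Nonempty) : ∃ L, IsWalk L v w := by
  suffices H : ∀ n (v : Finset C), v.Nonempty → (v ∆ w).card = n → ∃ L, IsWalk L v w from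
    H _ v hv rfl
  intro n
  induction n using Nat.strong_induction_on with
  | _ n ih =>
  intro v hv hn
  rcases eq_or_ne v w with rfl | hne
  · exact ⟨[v], List.isChain_singleton v, rfl, rfl, by rintro b hb; simp at hb; subst hb; exact hv⟩
  rcases (w \ v).eq_empty_or_nonempty with hwv | ⟨x, hx⟩
  · have hsub : w ⊆ v := by
      intro a ha; by_contra h; exact absurd (Finset.mem_sdiff.mpr ⟨ha, h⟩) (by simp [hwv])
    obtain ⟨x, hx⟩ := Finset.sdiff_nonempty.mpr (fun h => hne (Finset.Subset.antisymm h hsub))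
    rw [Finset.mem_sdiff] at hx
    have hx1 : x ∈ v := hx.1
    have hx2 : x ∉ w := hx.2
    have hkey : v.erase x ∆ w = (v ∆ w).erase x := by
      ext a
      simp only [Finset.mem_symmDiff, Finset.mem_erase]
      by_cases ha : a = x <;> simp [ha, hx1, hx2] <;> tauto
    have hlt : (v.erase x ∆ w).card < n := by
      rw [hkey, ← hn]
      exact Finset.card_erase_lt_of_mem (Finset.mem_symmDiff.mpr (Or.inl ⟨hx1, hx2⟩))
    have hv' : (v.erase x).Nonempty := hw.mono (fun a ha => Finset.mem_erase.mpr
      ⟨fun h => hx2 (h ▸ ha), hsub ha⟩)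
    obtain ⟨L, hch, hh, hl, hmem⟩ := ih _ hlt (v.erase x) hv' rfl
    obtain ⟨u, L', rfl⟩ : ∃ u L', L = u :: L' := by
      cases L with
      | nil => simp at hh
      | cons a l => exact ⟨a, l, rfl⟩
    simp at hh; subst hh
    refine ⟨v :: v.erase x :: L', ?_, rfl, ?_, ?_⟩
    · exact List.IsChain.cons_cons (adj_erase hx1) hch
    · simpa using hl
    · rintro b hb
      rcases List.mem_cons.mp hb with rfl | hb
      · exact hv
      · exact hmem b hb
  · rw [Finset.mem_sdiff] at hx
    have hx1 : x ∈ w := hx.1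
    have hx2 : x ∉ v := hx.2
    have hkey : insert x v ∆ w = (v ∆ w).erase x := by
      ext a
      simp only [Finset.mem_symmDiff, Finset.mem_erase, Finset.mem_insert]
      by_cases ha : a = x <;> simp [ha, hx1, hx2] <;> tauto
    have hlt : (insert x v ∆ w).card < n := by
      rw [hkey, ← hn]
      exact Finset.card_erase_lt_of_mem (Finset.mem_symmDiff.mpr (Or.inr ⟨hx1, hx2⟩))
    obtain ⟨L, hch, hh, hl, hmem⟩ := ih _ hlt (insert x v) (Finset.insert_nonempty _ _) rfl
    obtain ⟨u, L', rfl⟩ : ∃ u L', L = u :: L' := by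
      cases L with
      | nil => simp at hh
      | cons a l => exact ⟨a, l, rfl⟩
    simp at hh; subst hh
    refine ⟨v :: insert x v :: L', ?_, rfl, ?_, ?_⟩
    · exact List.IsChain.cons_cons (adj_insert hx2) hch
    · simpa using hl
    · rintro b hb
      rcases List.mem_cons.mp hb with rfl | hb
      · exact hv
      · exact hmem b hb

lemma gdist_lower {C : Type*} [DecidableEq C] (p : ℝ≥0∞) {v w : Finset C}
    (hv : v.Nonempty) (hw : w.Nonempty) (hne : v ≠ w) : (wt p v.card)⁻¹ ≤ gdist p v w := by
  apply le_csInf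
  · obtain ⟨L, hL⟩ := exists_walk v w hv hw
    exact ⟨pathCost p L, L, hL, rfl⟩
  · rintro x ⟨L, hL, rfl⟩
    exact pathCost_lower p hL hne

theorem stmt14 {C : Type*} [Fintype C] [DecidableEq C]
    (p : ℝ≥0∞) (hp : 1 ≤ p)
    (v : Finset C) (hv : v.Nonempty) (c : C) (hc : c ∉ v) :
    gdist p v (insert c v) = (wt p v.card)⁻¹ ∧
      ∀ w : Finset C, w.Nonempty → c ∈ w → gdist p v (insert c v) ≤ gdist p v w := by
  have hne : v ≠ insert c v := by
    intro h; exact hc (h ▸ Finset.mem_insert_self c v)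
  have heq : gdist p v (insert c v) = (wt p v.card)⁻¹ := by
    apply le_antisymm
    · apply csInf_le
      · exact ⟨0, by rintro x ⟨L, hL, rfl⟩; exact pathCost_nonneg p L⟩
      · refine ⟨[v, insert c v], ⟨?_, rfl, rfl, ?_⟩, ?_⟩
        · exact List.isChain_pair.mpr (adj_insert hc)
        · rintro b hb
          rcases List.mem_cons.mp hb with rfl | hb
          · exact hv
          · simp at hb; subst hb; exact Finset.insert_nonempty _ _
        · show (wt p v.card)⁻¹ = edgeCost p v (insert c v) + 0
          rw [add_zero]
          unfold edgeCost
          rw [Finset.card_insert_of_notMem hc, min_eq_left (Nat.le_succ _)]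
    · exact gdist_lower p hv (Finset.insert_nonempty _ _) hne
  refine ⟨heq, fun w hw hcw => ?_⟩
  rw [heq]
  exact gdist_lower p hv hw (fun h => hc (h ▸ hcw))
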